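/- Let A be a matrix in SL(2,ℂ) and let R be a real number with R ≥ 0 such that the complex absolute value of the trace of A is at most R. Then every eigenvalue λ of A satisfies |λ|² ≤ R² + 4; equivalently, 2·log|λ| ≤ log(R² + 4). -/

import Mathlib

open Real

/-- Matrix form of Lakeland–Leininger: if `A ∈ SL(2,ℂ)` has trace of complex
absolute value at most `R ≥ 0`, then every eigenvalue `λ` of `A` satisfies
`|λ|² ≤ R² + 4`, equivalently `2·log |λ| ≤ log (R² + 4)`. -/
theorem eigenvalue_bound_of_trace_bound
    (A : Matrix.SpecialLinearGroup (Fin 2) ℂ) (R : ℝ) (hR : 0 ≤ R)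
    (htr : ‖Matrix.trace (A : Matrix (Fin 2) (Fin 2) ℂ)‖ ≤ R)
    (lam : ℂ) (hlam : lam ∈ spectrum ℂ (A : Matrix (Fin 2) (Fin 2) ℂ)) :
    ‖lam‖ ^ 2 ≤ R ^ 2 + 4 ∧
      2 * Real.log ‖lam‖ ≤ Real.log (R ^ 2 + 4) := by
  set M : Matrix (Fin 2) (Fin 2) ℂ := (A : Matrix (Fin 2) (Fin 2) ℂ)
  have hdet1 : M.det = 1 := A.2
  rw [spectrum.mem_iff] at hlam
  rw [Matrix.isUnit_iff_isUnit_det, isUnit_iff_ne_zero, not_not] at hlam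
  have hdet : (algebraMap ℂ (Matrix (Fin 2) (Fin 2) ℂ) lam - M).det
      = lam ^ 2 - M.trace * lam + M.det := by
    rw [Matrix.det_fin_two, Matrix.trace_fin_two, Matrix.det_fin_two]
    simp [Matrix.algebraMap_matrix_apply]
    ring
  rw [hdet, hdet1] at hlam
  -- lam^2 = trace * lam - 1
  have key : lam ^ 2 = M.trace * lam - 1 := by linear_combination hlam
  have habs : ‖lam‖ ^ 2 ≤ R * ‖lam‖ + 1 := by
    calc ‖lam‖ ^ 2 = ‖lam ^ 2‖ := by rw [norm_pow]
    _ = ‖M.trace * lam - 1‖ := by rw [key]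
    _ ≤ ‖M.trace * lam‖ + ‖(1 : ℂ)‖ := by
        rw [sub_eq_add_neg]
        simpa using norm_add_le (M.trace * lam) (-1)
    _ ≤ R * ‖lam‖ + 1 := by
        rw [norm_mul, norm_one]
        have := norm_nonneg lam
        nlinarith
  set x := ‖lam‖ with hx
  have hx0 : 0 ≤ x := norm_nonneg lam
  have h1 : x ^ 2 ≤ R ^ 2 + 4 := by nlinarith [sq_nonneg (x - R), sq_nonneg (R*x - R^2 - 3), sq_nonneg (x*R - 2), sq_nonneg (2*x - R)]
  refine ⟨h1, ?_⟩
  have h2 : Real.log (x ^ 2) ≤ Real.log (R ^ 2 + 4) := by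
    rcases eq_or_lt_of_le hx0 with h | h
    · simp [← h]
      exact Real.log_nonneg (by nlinarith)
    · exact Real.log_le_log (by positivity) h1
  rwa [Real.log_pow, Nat.cast_ofNat] at h2
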